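/- Let γ_n < 0, γ_n → 0, k_n → ∞, √{k_n}·γ_n → −∞. Then for each fixed i, the quantity (1/√{k_n})·∑_{j=i}^{k_n−1} e^{jγ_n/√{k_n}} − |γ_n|^{−1}·e^{iγ_n/√{k_n}} satisfies: its square summed over i = 1,…,k_n−1, multiplied by 2|γ_n|³/√{k_n}, tends to 0 as n → ∞. -/

import Mathlib

open Filter

set_option maxHeartbeats 2000000 in
lemma coeff_key (γ : ℝ) (k : ℕ) (hγ : γ < 0) (hγ1 : -1 ≤ γ) (hk2 : 2 ≤ k) :
    (2 * |γ| ^ 3 / Real.sqrt k) *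
        ∑ i ∈ Finset.Icc 1 (k - 1),
          ((1 / Real.sqrt k) *
              (∑ j ∈ Finset.Icc i (k - 1), Real.exp (j * γ / Real.sqrt k)) -
            |γ|⁻¹ * Real.exp (i * γ / Real.sqrt k)) ^ 2
      ≤ 32 * γ ^ 2 + 16 * (Real.sqrt k * -γ) * Real.exp (2 * (Real.sqrt k * γ)) := by
  set s : ℝ := Real.sqrt k with hs_def
  have hk1 : (1:ℝ) ≤ (k:ℝ) := by exact_mod_cast Nat.one_le_of_lt hk2
  have hs1 : 1 ≤ s := Real.one_le_sqrt.mpr hk1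
  have hs0 : 0 < s := lt_of_lt_of_le one_pos hs1
  have hks : (k:ℝ) = s ^ 2 := (Real.sq_sqrt (by positivity : (0:ℝ) ≤ (k:ℕ))).symm
  set t : ℝ := -γ / s with ht_def
  have ht0 : 0 < t := div_pos (neg_pos.mpr hγ) hs0
  have ht1 : t ≤ 1 := by
    rw [ht_def, div_le_one hs0]; linarith
  have hγt : -γ = s * t := by
    rw [ht_def, mul_comm s _, div_mul_cancel₀ _ hs0.ne']
  have hG : |γ| = s * t := by rw [abs_of_neg hγ]; exact hγt
  have hG0 : 0 < |γ| := abs_pos.mpr (ne_of_lt hγ)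
  set q : ℝ := Real.exp (γ / s) with hq_def
  have hq0 : 0 < q := Real.exp_pos _
  have hq1 : q < 1 := Real.exp_lt_one_iff.mpr (div_neg_of_neg_of_pos hγ hs0)
  have hqt : q = Real.exp (-t) := by rw [hq_def, ht_def]; congr 1; ring
  have hqne : q ≠ 1 := ne_of_lt hq1
  -- 1 - q bounds
  have h1q_le : 1 - q ≤ t := by
    have := Real.add_one_le_exp (-t)
    rw [← hqt] at this; linarith
  have h1q_ge : t / 2 ≤ 1 - q := by
    have he : 1 + t ≤ Real.exp t := by have := Real.add_one_le_exp t; linarith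
    have hqe : q * Real.exp t = 1 := by
      rw [hqt, ← Real.exp_add]; simp
    nlinarith [Real.exp_pos t]
  have h1q0 : 0 < 1 - q := lt_of_lt_of_le (by linarith) h1q_ge
  set c : ℝ := 1 / (s * (1 - q)) - |γ|⁻¹ with hc_def
  set d : ℝ := q ^ k / (s * (1 - q)) with hd_def
  -- c bounds
  have hnum : t - (1 - q) ≤ t ^ 2 := by
    have h := Real.abs_exp_sub_one_sub_id_le (x := -t) (by rw [abs_of_nonpos (by linarith)]; linarith)
    rw [← hqt] at h
    have := abs_le.mp h
    nlinarith [this.2]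
  have hc0 : 0 ≤ c := by
    rw [hc_def, hG, sub_nonneg, inv_eq_one_div]
    apply one_div_le_one_div_of_le (mul_pos hs0 h1q0)
    nlinarith
  have hcs : s * c ≤ 2 := by
    have hceq : c = (t - (1 - q)) / (s * (1 - q) * t) := by
      rw [hc_def, hG]; field_simp
    rw [hceq, ← mul_div_assoc, div_le_iff₀ (mul_pos (mul_pos hs0 h1q0) ht0)]
    nlinarith [mul_le_mul_of_nonneg_right hnum hs0.le]
  -- d bounds
  have hqk : q ^ k = Real.exp (s * γ) := by
    rw [hq_def, ← Real.exp_nat_mul]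
    congr 1
    rw [hks]; field_simp
  have hd0 : 0 ≤ d := by
    rw [hd_def]; exact div_nonneg (pow_nonneg hq0.le _) (mul_nonneg hs0.le h1q0.le)
  set E : ℝ := Real.exp (s * γ) with hE_def
  have hE0 : 0 < E := Real.exp_pos _
  have hE2 : E ^ 2 = Real.exp (2 * (s * γ)) := by
    rw [hE_def, sq, ← Real.exp_add]; congr 1; ring
  clear_value s t q c d E
  clear hs_def ht_def hE_def hqt
  have hstd : (s * t) * d ≤ 2 * E := by
    rw [hd_def, hqk, ← mul_div_assoc, div_le_iff₀ (mul_pos hs0 h1q0)]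
    nlinarith [mul_le_mul_of_nonneg_left h1q_ge (mul_pos hs0 hE0).le]
  -- per-term bound
  have hterm : ∀ i ∈ Finset.Icc 1 (k - 1),
      ((1 / s) * (∑ j ∈ Finset.Icc i (k - 1), Real.exp (j * γ / s)) -
          |γ|⁻¹ * Real.exp (i * γ / s)) ^ 2 ≤ 2 * c ^ 2 * (q ^ 2) ^ i + 2 * d ^ 2 := by
    intro i hi
    obtain ⟨hi1, hi2⟩ := Finset.mem_Icc.mp hi
    have hik : i ≤ k := le_trans hi2 (Nat.sub_le k 1)
    have hrw : ∀ j : ℕ, Real.exp (j * γ / s) = q ^ j := fun j => by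
      rw [hq_def, mul_div_assoc, Real.exp_nat_mul]
    have hIcci : Finset.Icc i (k - 1) = Finset.Ico i k := by
      rw [← Finset.Ico_add_one_right_eq_Icc]; congr 1; omega
    rw [hIcci]
    simp only [hrw]
    rw [geom_sum_Ico hqne hik]
    have heq : (1 / s) * ((q ^ k - q ^ i) / (q - 1)) - |γ|⁻¹ * q ^ i = c * q ^ i - d := by
      rw [hc_def, hd_def, hG]
      have h1 : q - 1 ≠ 0 := by linarith
      field_simp [hs0.ne', ht0.ne', h1, h1q0.ne']
      ring
    rw [heq]
    have hpow : (q ^ 2) ^ i = (q ^ i) ^ 2 := by rw [← pow_mul, ← pow_mul, Nat.mul_comm]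
    rw [hpow]
    nlinarith [sq_nonneg (c * q ^ i + d)]
  -- geometric sum bound
  have hq2ne : q ^ 2 ≠ 1 := ne_of_lt (by nlinarith)
  have hgeo : ∑ i ∈ Finset.Icc 1 (k - 1), (q ^ 2) ^ i ≤ 2 / t := by
    have hIcc : Finset.Icc 1 (k - 1) = Finset.Ico 1 k := by
      rw [← Finset.Ico_add_one_right_eq_Icc]; congr 1; omega
    rw [hIcc, geom_sum_Ico hq2ne (by omega)]
    rw [show (q ^ 2) ^ k - (q ^ 2) ^ 1 = -((q ^ 2) ^ 1 - (q ^ 2) ^ k) by ring,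
        show q ^ 2 - 1 = -(1 - q ^ 2) by ring, neg_div_neg_eq]
    rw [div_le_div_iff₀ (by nlinarith) ht0]
    nlinarith [pow_nonneg (sq_nonneg q) k, mul_nonneg (mul_nonneg hq0.le hq0.le) ht0.le,
      mul_nonneg hq0.le (sub_nonneg.mpr hq1.le)]
  have hsum_le : ∑ i ∈ Finset.Icc 1 (k - 1), (2 * c ^ 2 * (q ^ 2) ^ i + 2 * d ^ 2)
      ≤ 2 * c ^ 2 * (2 / t) + (k:ℝ) * (2 * d ^ 2) := by
    rw [Finset.sum_add_distrib, ← Finset.mul_sum, Finset.sum_const, nsmul_eq_mul]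
    have hcard : ((Finset.Icc 1 (k - 1)).card : ℝ) ≤ (k:ℝ) := by
      rw [Nat.card_Icc]
      have : k - 1 + 1 - 1 ≤ k := by omega
      exact_mod_cast this
    gcongr
  have hM : 0 ≤ 2 * |γ| ^ 3 / s := div_nonneg (by positivity) hs0.le
  calc (2 * |γ| ^ 3 / s) * ∑ i ∈ Finset.Icc 1 (k - 1),
        ((1 / s) * (∑ j ∈ Finset.Icc i (k - 1), Real.exp (j * γ / s)) -
          |γ|⁻¹ * Real.exp (i * γ / s)) ^ 2
      ≤ (2 * |γ| ^ 3 / s) * (2 * c ^ 2 * (2 / t) + (k:ℝ) * (2 * d ^ 2)) :=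
        mul_le_mul_of_nonneg_left (le_trans (Finset.sum_le_sum hterm) hsum_le) hM
    _ = 8 * s ^ 2 * t ^ 2 * c ^ 2 + 4 * s ^ 4 * t ^ 3 * d ^ 2 := by
        rw [hG, hks]; field_simp [hs0.ne', ht0.ne']; ring
    _ ≤ 32 * (s * t) ^ 2 + 16 * (s * (s * t)) * E ^ 2 := by
        have h4 : (s * c) ^ 2 ≤ 4 := by nlinarith [mul_nonneg hs0.le hc0]
        have h5 : ((s * t) * d) ^ 2 ≤ 4 * E ^ 2 := by
          nlinarith [mul_nonneg (mul_nonneg hs0.le ht0.le) hd0]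
        have e1 : 8 * s ^ 2 * t ^ 2 * c ^ 2 ≤ 32 * (s * t) ^ 2 := by
          nlinarith [mul_le_mul_of_nonneg_left h4 (by positivity : (0:ℝ) ≤ 8 * t ^ 2),
            mul_pos ht0 ht0]
        have e2 : 4 * s ^ 4 * t ^ 3 * d ^ 2 ≤ 16 * (s * (s * t)) * E ^ 2 := by
          nlinarith [mul_le_mul_of_nonneg_left h5 (by nlinarith [sq_nonneg s] : (0:ℝ) ≤ 4 * s ^ 2 * t)]
        linarith
    _ = 32 * γ ^ 2 + 16 * (s * -γ) * Real.exp (2 * (s * γ)) := by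
        rw [hE2, ← hγt]
        ring
open Filter in
theorem coefficient_deviation_limit (γ : ℕ → ℝ) (k : ℕ → ℕ)
    (hγneg : ∀ n, γ n < 0) (hγ0 : Tendsto γ atTop (nhds 0))
    (hk : Tendsto k atTop atTop)
    (hkγ : Tendsto (fun n => Real.sqrt (k n) * γ n) atTop atBot) :
    Tendsto (fun n => (2 * |γ n| ^ 3 / Real.sqrt (k n)) *
        ∑ i ∈ Finset.Icc 1 (k n - 1),
          ((1 / Real.sqrt (k n)) *
              (∑ j ∈ Finset.Icc i (k n - 1), Real.exp (j * γ n / Real.sqrt (k n))) -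
            |γ n|⁻¹ * Real.exp (i * γ n / Real.sqrt (k n))) ^ 2)
      atTop (nhds 0) := by
  have h1 : Tendsto (fun n => 32 * γ n ^ 2) atTop (nhds 0) := by
    have h := (hγ0.mul hγ0).const_mul (32:ℝ)
    simp only [mul_zero] at h
    exact h.congr fun n => by ring
  have hbase : Tendsto (fun x : ℝ => 16 * -x * Real.exp (2 * x)) atBot (nhds 0) := by
    have hneg2 : Tendsto (fun y : ℝ => 2 * -y) atBot atTop :=
      tendsto_neg_atBot_atTop.const_mul_atTop two_pos
    have hB := (Real.tendsto_pow_mul_exp_neg_atTop_nhds_zero 1).comp hneg2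
    have hC := hB.const_mul (8:ℝ)
    simp only [mul_zero] at hC
    refine hC.congr fun x => ?_
    show 8 * ((2 * -x) ^ 1 * Real.exp (-(2 * -x))) = 16 * -x * Real.exp (2 * x)
    rw [show -(2 * -x) = 2 * x by ring]
    ring
  have h2 : Tendsto (fun n => 16 * (Real.sqrt (k n) * -γ n) *
      Real.exp (2 * (Real.sqrt (k n) * γ n))) atTop (nhds 0) := by
    refine (hbase.comp hkγ).congr fun n => ?_
    show 16 * -(Real.sqrt (k n) * γ n) * Real.exp (2 * (Real.sqrt (k n) * γ n)) = _
    ring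
  have hg : Tendsto (fun n => 32 * γ n ^ 2 + 16 * (Real.sqrt (k n) * -γ n) *
      Real.exp (2 * (Real.sqrt (k n) * γ n))) atTop (nhds 0) := by
    have := h1.add h2
    simp only [add_zero] at this
    exact this
  refine tendsto_of_tendsto_of_tendsto_of_le_of_le' tendsto_const_nhds hg ?_ ?_
  · exact Eventually.of_forall fun n => mul_nonneg
      (div_nonneg (by positivity) (Real.sqrt_nonneg _))
      (Finset.sum_nonneg fun i _ => sq_nonneg _)
  · have hev1 : ∀ᶠ n in atTop, -1 ≤ γ n :=
      hγ0.eventually (eventually_ge_nhds (by norm_num : (-1:ℝ) < 0))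
    have hev2 : ∀ᶠ n in atTop, 2 ≤ k n := hk.eventually_ge_atTop 2
    filter_upwards [hev1, hev2] with n hn1 hn2
    exact coeff_key (γ n) (k n) (hγneg n) hn1 hn2
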